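/- Interventional factorization (discrete analogue of Proposition 3.1): in a discrete structural equation model, let B ⊆ [d], let b ∈ A^B, and define the intervened variables V'_1,…,V'_d : Ω → A by V'_i = b_i (constant) for i ∈ B and V'_i = f_i((V'_j)_{j∈Pa_i}) + ε_i for i ∉ B (with the same noises ε_i). Let π be a topological order of G and Pred_i(π) := {j : π⁻¹(j) < π⁻¹(i)}. Then for every v ∈ A^d satisfying P((V_j)_{j∈Pred_i(π)} = v|_{Pred_i(π)}) > 0 for every i ∉ B, one has: P(V'_1 = v_1, …, V'_d = v_d) equals 0 if v_i ≠ b_i for some i ∈ B, and equals ∏_{i∉B} P(V_i = v_i | (V_j)_{j∈Pred_i(π)} = v|_{Pred_i(π)}) otherwise, where the conditional probabilities on the right are those of the original (observational) variables V. -/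

import Mathlib

open MeasureTheory

/-- Interventional factorization (discrete analogue of Proposition 3.1): the
joint distribution of the intervened variables `V'` (where the variables in `B`
are set to the constants `b` and the others follow the same structural
equations with the same noises) vanishes if the target value disagrees with
`b` on `B`, and otherwise factorizes into the observational conditional
probabilities of each non-intervened node given its predecessors under a
topological order `π`. -/
theorem stmt8 {d : ℕ} (E : Fin d → Fin d → Prop)
    (hacyc : ∀ i, ¬ Relation.TransGen E i i)
    {Ω A : Type*} [MeasurableSpace Ω] (P : Measure Ω) [IsProbabilityMeasure P]
    [Fintype A] [AddCommGroup A] [MeasurableSpace A] [MeasurableSingletonClass A]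
    (ε : Fin d → Ω → A) (hεmeas : ∀ i, Measurable (ε i))
    (hindep : ProbabilityTheory.iIndepFun ε P)
    (f : (i : Fin d) → ({j : Fin d // E j i} → A) → A)
    (V : Fin d → Ω → A) (hVmeas : ∀ i, Measurable (V i))
    (hV : ∀ i ω, V i ω = f i (fun j => V j.1 ω) + ε i ω)
    (π : Equiv.Perm (Fin d))
    (hπ : ∀ a b, Relation.TransGen E a b → π.symm a < π.symm b)
    (B : Finset (Fin d)) (b : {j : Fin d // j ∈ B} → A)
    (V' : Fin d → Ω → A) (hV'meas : ∀ i, Measurable (V' i))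
    (hV'B : ∀ i, ∀ hi : i ∈ B, ∀ ω, V' i ω = b ⟨i, hi⟩)
    (hV'f : ∀ i, i ∉ B → ∀ ω, V' i ω = f i (fun j => V' j.1 ω) + ε i ω)
    (v : Fin d → A)
    (hpos : ∀ i, i ∉ B →
      P {ω | ∀ j : {j : Fin d // π.symm j < π.symm i}, V j.1 ω = v j.1} ≠ 0) :
    ((∃ i, ∃ hi : i ∈ B, v i ≠ b ⟨i, hi⟩) → P {ω | ∀ i, V' i ω = v i} = 0)
    ∧ ((∀ i, ∀ hi : i ∈ B, v i = b ⟨i, hi⟩) →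
        P {ω | ∀ i, V' i ω = v i}
          = ∏ i ∈ Bᶜ,
              P ({ω | V i ω = v i}
                  ∩ {ω | ∀ j : {j : Fin d // π.symm j < π.symm i}, V j.1 ω = v j.1})
                / P {ω | ∀ j : {j : Fin d // π.symm j < π.symm i}, V j.1 ω = v j.1}) := by
  classical
  -- the forced noise values
  set c : Fin d → A := fun i => v i - f i (fun j => v j.1) with hc
  -- parents come strictly earlier in the topological order
  have hpar : ∀ i : Fin d, ∀ j : {j : Fin d // E j i}, π.symm j.1 < π.symm i :=
    fun i j => hπ j.1 i (Relation.TransGen.single j.2)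
  -- Step 1: each `V i` is a function of the noises with index ≤ i in the order
  have key : ∀ n : ℕ, ∀ i : Fin d, (π.symm i : ℕ) < n →
      ∃ g : ({j : Fin d // π.symm j ≤ π.symm i} → A) → A,
        ∀ ω, V i ω = g (fun j => ε j.1 ω) := by
    intro n
    induction n with
    | zero => exact fun i h => absurd h (Nat.not_lt_zero _)
    | succ n ih =>
      intro i hi
      choose g hg using ih
      refine ⟨fun x => f i (fun j =>
          g j.1 (by
            have := hpar i j
            have h2 : (π.symm j.1 : ℕ) < (π.symm i : ℕ) := this
            omega)
          (fun k => x ⟨k.1, le_trans k.2 (le_of_lt (hpar i j))⟩)) + x ⟨i, le_rfl⟩,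
        fun ω => ?_⟩
      rw [hV i ω]
      congr 1
      exact congrArg (f i) (funext fun j => hg j.1 _ ω)
  have key' : ∀ i : Fin d, ∃ g : ({j : Fin d // π.symm j ≤ π.symm i} → A) → A,
      ∀ ω, V i ω = g (fun j => ε j.1 ω) := fun i => key d i (π.symm i).isLt
  choose g hg using key'
  -- notation for predecessor events
  set Pred : Fin d → Set Ω :=
    fun i => {ω | ∀ j : {j : Fin d // π.symm j < π.symm i}, V j.1 ω = v j.1} with hPred
  -- Step 2: factor identity
  have hfactor : ∀ i, i ∉ B →
      P ({ω | V i ω = v i} ∩ Pred i) = P (ε i ⁻¹' {c i}) * P (Pred i) := by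
    intro i hi
    -- set equality on the predecessor event
    have hset : {ω | V i ω = v i} ∩ Pred i = (ε i ⁻¹' {c i}) ∩ Pred i := by
      ext ω
      simp only [Set.mem_inter_iff, Set.mem_setOf_eq, Set.mem_preimage,
        Set.mem_singleton_iff, hPred]
      constructor
      · rintro ⟨h1, h2⟩
        refine ⟨?_, h2⟩
        have hfv : f i (fun j => V j.1 ω) = f i (fun j => v j.1) := by
          congr 1; funext j; exact h2 ⟨j.1, hpar i j⟩
        have hve : f i (fun j => v j.1) + ε i ω = v i := by
          rw [← hfv, ← hV i ω]; exact h1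
        show ε i ω = c i
        simp only [hc]
        exact eq_sub_of_add_eq' hve
      · rintro ⟨h1, h2⟩
        refine ⟨?_, h2⟩
        have hfv : f i (fun j => V j.1 ω) = f i (fun j => v j.1) := by
          congr 1; funext j; exact h2 ⟨j.1, hpar i j⟩
        rw [hV i ω, hfv, h1, hc]
        simp
    rw [hset]
    -- independence of ε i and the predecessor noises
    set S : Finset (Fin d) := Finset.univ.filter (fun j => π.symm j < π.symm i) with hS
    have hmemS : ∀ j : Fin d, j ∈ S ↔ π.symm j < π.symm i := by
      intro j; simp [hS]
    set W : Ω → ({x // x ∈ S} → A) := fun ω j => ε j.1 ω with hW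
    have hdisj : Disjoint ({i} : Finset (Fin d)) S := by
      simp only [Finset.disjoint_singleton_left, hmemS]
      exact lt_irrefl _
    have hI0 := hindep.indepFun_finset {i} S hdisj hεmeas
    have hφ : Measurable (fun x : ({x // x ∈ ({i} : Finset (Fin d))} → A) =>
        x ⟨i, Finset.mem_singleton_self i⟩) := measurable_pi_apply _
    have hI : ProbabilityTheory.IndepFun (ε i) W P :=
      hI0.comp hφ measurable_id
    set M : Set ({x // x ∈ S} → A) :=
      {x | ∀ j : {j : Fin d // π.symm j < π.symm i},
        g j.1 (fun k => x ⟨k.1, (hmemS k.1).2 (lt_of_le_of_lt k.2 j.2)⟩) = v j.1} with hM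
    have hPredW : Pred i = W ⁻¹' M := by
      ext ω
      simp only [hPred, Set.mem_setOf_eq, Set.mem_preimage, hM, hW]
      constructor
      · intro h j
        rw [← hg j.1 ω]
        exact h j
      · intro h j
        rw [hg j.1 ω]
        exact h j
    have hMmeas : MeasurableSet M := .of_discrete
    rw [hPredW]
    exact hI.measure_inter_preimage_eq_mul _ _ (measurableSet_singleton _) hMmeas
  constructor
  · -- disagreement case
    rintro ⟨i, hi, hne⟩
    rw [← le_zero_iff, ← measure_empty (μ := P)]
    apply measure_mono
    intro ω hω
    exact hne ((hω i).symm.trans (hV'B i hi ω))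
  · -- agreement case
    intro hvb
    -- main set equality
    have hmain : {ω | ∀ i, V' i ω = v i} = ⋂ i ∈ Bᶜ, ε i ⁻¹' {c i} := by
      ext ω
      simp only [Set.mem_setOf_eq, Set.mem_iInter, Set.mem_preimage,
        Set.mem_singleton_iff, Finset.mem_compl]
      constructor
      · intro h i hi
        have hfv : f i (fun j => V' j.1 ω) = f i (fun j => v j.1) := by
          congr 1; funext j; exact h j.1
        have hve : f i (fun j => v j.1) + ε i ω = v i := by
          rw [← hfv, ← hV'f i hi ω]; exact h i
        show ε i ω = c i
        simp only [hc]
        exact eq_sub_of_add_eq' hve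
      · intro h
        have hall : ∀ n : ℕ, ∀ i : Fin d, (π.symm i : ℕ) < n → V' i ω = v i := by
          intro n
          induction n with
          | zero => exact fun i h => absurd h (Nat.not_lt_zero _)
          | succ n ih =>
            intro i hin
            by_cases hi : i ∈ B
            · rw [hV'B i hi ω, hvb i hi]
            · have hfv : f i (fun j => V' j.1 ω) = f i (fun j => v j.1) := by
                congr 1; funext j
                refine ih j.1 ?_
                have h2 : (π.symm j.1 : ℕ) < (π.symm i : ℕ) := hpar i j
                omega
              rw [hV'f i hi ω, hfv, h i hi, hc]
              simp
        intro i
        exact hall d i (π.symm i).isLt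
    rw [hmain]
    -- independence product for noises
    have hprod : P (⋂ i ∈ Bᶜ, ε i ⁻¹' {c i}) = ∏ i ∈ Bᶜ, P (ε i ⁻¹' {c i}) := by
      refine hindep.meas_biInter (fun i _ => ?_)
      exact ⟨{c i}, measurableSet_singleton _, rfl⟩
    rw [hprod]
    refine Finset.prod_congr rfl (fun i hi => ?_)
    rw [Finset.mem_compl] at hi
    rw [hfactor i hi]
    rw [mul_div_assoc, ENNReal.div_self (hpos i hi) (measure_ne_top P _), mul_one]
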